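/- The Bernoulli numbers satisfy: for every integer k ≥ 1, 2^k B_k / k! = Σ_{n=1}^{k} Σ_{k_1+⋯+k_n = k, k_i ≥ 1} (c_{k_1} ⋯ c_{k_n}) / n!, where c_j := (−1)^{j+1} 2^j B_j / (j · j!). -/

import Mathlib

open PowerSeries Finset

noncomputable def Dser : ℚ⟦X⟧ := X * (d⁄dX ℚ (bernoulliPowerSeries ℚ))

lemma derivative_exp : d⁄dX ℚ (exp ℚ) = exp ℚ := by
  ext n
  rw [PowerSeries.coeff_derivative, coeff_exp, coeff_exp]
  push_cast
  rw [Nat.factorial_succ]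
  push_cast
  field_simp

lemma exp_sub_one_ne : (exp ℚ - 1) ≠ 0 := by
  intro h
  have := congrArg (PowerSeries.coeff 1) h
  simp [coeff_exp] at this

lemma key_ps : bernoulliPowerSeries ℚ * bernoulli'PowerSeries ℚ
    = bernoulliPowerSeries ℚ - Dser := by
  have h2 : (exp ℚ - 1)^2 ≠ 0 := pow_ne_zero _ exp_sub_one_ne
  apply mul_right_cancel₀ h2
  have hB := bernoulliPowerSeries_mul_exp_sub_one ℚ
  have hB' := bernoulli'PowerSeries_mul_exp_sub_one ℚ
  have hd : d⁄dX ℚ (bernoulliPowerSeries ℚ) * (exp ℚ - 1)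
      + bernoulliPowerSeries ℚ * exp ℚ = 1 := by
    have := congrArg (d⁄dX ℚ) hB
    rw [Derivation.leibniz] at this
    simp only [derivative_X, map_sub, _root_.derivative_exp, smul_eq_mul] at this
    rw [show (d⁄dX ℚ) (1:ℚ⟦X⟧) = 0 from Derivation.map_one_eq_zero _] at this
    linear_combination this
  calc bernoulliPowerSeries ℚ * bernoulli'PowerSeries ℚ * (exp ℚ - 1)^2
      = (bernoulliPowerSeries ℚ * (exp ℚ - 1)) * (bernoulli'PowerSeries ℚ * (exp ℚ - 1)) := by ring
    _ = X * (X * exp ℚ) := by rw [hB, hB']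
    _ = (bernoulliPowerSeries ℚ - Dser) * (exp ℚ - 1)^2 := by
        rw [Dser]
        linear_combination (X : ℚ⟦X⟧) * (exp ℚ - 1) * hd - ((exp ℚ - 1) + X * exp ℚ) * hB

lemma coeff_Dser (k : ℕ) : PowerSeries.coeff k Dser = k * bernoulli k / k.factorial := by
  rcases k with - | n
  · simp [Dser]
  · rw [Dser, PowerSeries.coeff_succ_X_mul, PowerSeries.coeff_derivative,
      bernoulliPowerSeries, PowerSeries.coeff_mk]
    push_cast [Nat.factorial_succ]
    field_simp
    ring
    simp

lemma bern_quad (k : ℕ) :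
    ∑ j ∈ range (k+1), (bernoulli' j / j.factorial) * (bernoulli (k-j) / (k-j).factorial)
      = (1 - k) * bernoulli k / k.factorial := by
  have h := congrArg (PowerSeries.coeff k) key_ps
  rw [mul_comm (bernoulliPowerSeries ℚ), PowerSeries.coeff_mul, map_sub, coeff_Dser,
    Finset.Nat.sum_antidiagonal_eq_sum_range_succ_mk] at h
  simp only [bernoulliPowerSeries, bernoulli'PowerSeries, PowerSeries.coeff_mk,
    Algebra.algebraMap_self, RingHom.id_apply] at h
  rw [h]
  ring

noncomputable def bγ (j : ℕ) : ℚ :=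
  ((-1 : ℚ) ^ (j + 1) * 2 ^ j * bernoulli j) / ((j : ℚ) * (j.factorial : ℚ))

lemma L2 (k : ℕ) (hk : 1 ≤ k) :
    (k : ℚ) * (2 ^ k * bernoulli k / k.factorial)
      = ∑ j ∈ Icc 1 k, (j : ℚ) * bγ j
          * (2 ^ (k - j) * bernoulli (k - j) / (k - j).factorial) := by
  have hins : range (k+1) = insert 0 (Icc 1 k) := by
    ext x; simp only [mem_range, mem_insert, mem_Icc]; omega
  have h0 : (0 : ℕ) ∉ Icc 1 k := by simp
  have hq := bern_quad k
  rw [hins, Finset.sum_insert h0] at hq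
  have hterm : ∀ j ∈ Icc 1 k, (j : ℚ) * bγ j
      * (2 ^ (k - j) * bernoulli (k - j) / (k - j).factorial)
      = -2 ^ k * ((bernoulli' j / j.factorial) * (bernoulli (k-j) / (k-j).factorial)) := by
    intro j hj
    simp only [mem_Icc] at hj
    have hj0 : (j : ℚ) ≠ 0 := Nat.cast_ne_zero.2 (by omega)
    have hf1 : (j.factorial : ℚ) ≠ 0 := Nat.cast_ne_zero.2 j.factorial_ne_zero
    have hf2 : ((k-j).factorial : ℚ) ≠ 0 := Nat.cast_ne_zero.2 (k-j).factorial_ne_zero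
    have h2 : (2 : ℚ) ^ j * 2 ^ (k - j) = 2 ^ k := by
      rw [← pow_add]; congr 1; omega
    rw [bγ, bernoulli'_eq_bernoulli, pow_succ]
    field_simp
    linear_combination (-(bernoulli j * bernoulli (k-j))) * h2
  rw [Finset.sum_congr rfl hterm, ← Finset.mul_sum]
  have hsum : ∑ j ∈ Icc 1 k, (bernoulli' j / j.factorial) * (bernoulli (k-j) / (k-j).factorial)
      = -(k : ℚ) * bernoulli k / k.factorial := by
    have h00 : bernoulli' 0 / ((Nat.factorial 0 : ℕ) : ℚ) * (bernoulli (k-0) / ((k-0).factorial : ℚ))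
        = bernoulli k / k.factorial := by simp
    rw [h00] at hq
    linear_combination hq
  rw [hsum]
  ring

lemma bγ_zero : bγ 0 = 0 := by simp [bγ]

noncomputable def Fγ : ℚ⟦X⟧ := PowerSeries.mk bγ

noncomputable def wsum (k : ℕ) : ℚ :=
  ∑ c : Composition k, (c.blocks.map bγ).prod / (c.length.factorial : ℚ)

lemma prod_map_blocks {k : ℕ} (c : Composition k) :
    (c.blocks.map bγ).prod = ∏ i ∈ range c.length, bγ (c.blocks.getD i 0) := by
  conv_lhs => rw [← Composition.ofFn_blocksFun, List.map_ofFn, List.prod_ofFn]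
  rw [← Fin.prod_univ_eq_prod_range (fun i => bγ (c.blocks.getD i 0)) c.length]
  apply Finset.prod_congr rfl
  intro i _
  simp only [Function.comp]
  congr 1
  have hi : (i : ℕ) < c.blocks.length := by rw [c.blocks_length]; exact i.2
  rw [List.getD_eq_getElem _ _ hi]
  rfl

lemma comp_coeff (k n : ℕ) :
    ∑ c ∈ univ.filter (fun c : Composition k => c.length = n), (c.blocks.map bγ).prod
      = PowerSeries.coeff k (Fγ ^ n) := by
  rw [PowerSeries.coeff_pow]
  simp only [Fγ, PowerSeries.coeff_mk]
  apply Finset.sum_bij_ne_zero (i := fun c hc _ =>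
    Finsupp.onFinset (range n) (fun i => c.blocks.getD i 0) (by
      intro i hne
      simp only [Finset.mem_filter, Finset.mem_univ, true_and] at hc
      by_contra hi
      rw [Finset.mem_range, not_lt] at hi
      exact hne (List.getD_eq_default _ _ (by rw [c.blocks_length, hc]; exact hi))))
  · -- maps to finsuppAntidiag
    intro c hc hne
    simp only [Finset.mem_filter, Finset.mem_univ, true_and] at hc
    rw [Finset.mem_finsuppAntidiag]
    constructor
    · show ∑ i ∈ range n, c.blocks.getD i 0 = k
      have : ∑ i ∈ range n, c.blocks.getD i 0 = ((List.range n).map (fun i => c.blocks.getD i 0)).sum := rfl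
      rw [this]
      have hlen : c.blocks.length = n := by rw [c.blocks_length, hc]
      have : (List.range n).map (fun i => c.blocks.getD i 0) = c.blocks := by
        apply List.ext_getElem
        · simp [hlen]
        · intro i h1 h2
          simp only [List.getElem_map, List.getElem_range]
          exact List.getD_eq_getElem _ _ h2
      rw [this, c.blocks_sum]
    · exact Finsupp.support_onFinset_subset
  · -- injective
    intro c1 h1 hne1 c2 h2 hne2 heq
    simp only [Finset.mem_filter, Finset.mem_univ, true_and] at h1 h2
    have hb : c1.blocks = c2.blocks := by
      apply List.ext_getElem
      · rw [c1.blocks_length, c2.blocks_length, h1, h2]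
      · intro i hi1 hi2
        have := congrArg (fun f => f i) (congrArg Finsupp.toFun heq)
        simp only [Finsupp.onFinset] at this
        rwa [List.getD_eq_getElem _ _ hi1, List.getD_eq_getElem _ _ hi2] at this
    cases c1; cases c2; simpa using hb
  · -- surjective
    intro l hl hgne
    rw [Finset.mem_finsuppAntidiag] at hl
    have hpos : ∀ i ∈ range n, l i ≠ 0 := by
      intro i hi h0
      apply hgne
      apply Finset.prod_eq_zero hi
      rw [h0, bγ_zero]
    refine ⟨⟨(List.range n).map l, ?_, ?_⟩, ?_, ?_, ?_⟩
    · intro i hi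
      simp only [List.mem_map, List.mem_range] at hi
      obtain ⟨j, hj, rfl⟩ := hi
      exact Nat.pos_of_ne_zero (hpos j (Finset.mem_range.2 hj))
    · show ((List.range n).map l).sum = k
      have : ((List.range n).map l).sum = ∑ i ∈ range n, l i := rfl
      rw [this]
      exact hl.1
    · simp only [Finset.mem_filter, Finset.mem_univ, true_and]
      show ((List.range n).map l).length = n
      simp
    · -- product nonzero
      show (((List.range n).map l).map bγ).prod ≠ 0
      rw [List.map_map]
      exact hgne
    · -- maps back to l
      ext i
      simp only [Finsupp.onFinset_apply]
      rcases lt_or_ge i n with hi | hi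
      · have hlt : i < ((List.range n).map l).length := by simpa using hi
        rw [List.getD_eq_getElem _ _ hlt]
        simp
      · rw [List.getD_eq_default _ _ (by simpa using hi)]
        symm
        by_contra h0
        have := hl.2 (Finsupp.mem_support_iff.2 h0)
        rw [Finset.mem_range] at this; omega
  · -- weights agree
    intro c hc hne
    simp only [Finset.mem_filter, Finset.mem_univ, true_and] at hc
    rw [prod_map_blocks]
    apply Finset.prod_congr (by rw [hc])
    intro i _
    simp

lemma wsum_eq (k : ℕ) :
    wsum k = ∑ n ∈ range (k+1), PowerSeries.coeff k (Fγ ^ n) / (n.factorial : ℚ) := by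
  rw [wsum, ← Finset.sum_fiberwise_of_maps_to (g := Composition.length) (t := range (k+1))
    (fun c _ => Finset.mem_range.2 (Nat.lt_succ_of_le c.length_le))]
  apply Finset.sum_congr rfl
  intro n _
  rw [← comp_coeff, Finset.sum_div]
  apply Finset.sum_congr rfl
  intro c hc
  simp only [Finset.mem_filter] at hc
  rw [hc.2]

lemma coeff_pow_zero {m d : ℕ} (h : d < m) : PowerSeries.coeff d (Fγ ^ m) = 0 := by
  have hX : (X : ℚ⟦X⟧) ∣ Fγ := by
    rw [PowerSeries.X_dvd_iff]
    show bγ 0 = 0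
    exact bγ_zero
  exact PowerSeries.X_pow_dvd_iff.1 (pow_dvd_pow_of_dvd hX m) d h

lemma coeff_deriv_pow (n k : ℕ) (hk : 1 ≤ k) :
    (k : ℚ) * PowerSeries.coeff k (Fγ ^ (n+1))
      = (n+1 : ℚ) * ∑ j ∈ Icc 1 k, (j : ℚ) * bγ j * PowerSeries.coeff (k - j) (Fγ ^ n) := by
  obtain ⟨m, rfl⟩ : ∃ m, k = m + 1 := ⟨k - 1, by omega⟩
  have hD : d⁄dX ℚ (Fγ ^ (n+1)) = (n+1 : ℕ) • (Fγ ^ n * d⁄dX ℚ Fγ) := by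
    rw [Derivation.leibniz_pow]
    simp [smul_eq_mul]
  have h1 := congrArg (PowerSeries.coeff m) hD
  rw [PowerSeries.coeff_derivative] at h1
  rw [map_nsmul, PowerSeries.coeff_mul] at h1
  have h2 : ((m+1 : ℕ) : ℚ) * PowerSeries.coeff (m+1) (Fγ ^ (n+1))
      = (n+1 : ℚ) * ∑ p ∈ Finset.HasAntidiagonal.antidiagonal m,
          PowerSeries.coeff p.1 (Fγ ^ n) * (bγ (p.2+1) * (p.2+1)) := by
    push_cast at h1 ⊢
    rw [mul_comm] at h1
    rw [h1, nsmul_eq_mul]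
    push_cast
    congr 1
    apply Finset.sum_congr rfl
    intro p _
    congr 1
    rw [PowerSeries.coeff_derivative]
    simp [Fγ, PowerSeries.coeff_mk]
  rw [Finset.Nat.sum_antidiagonal_eq_sum_range_succ_mk] at h2
  push_cast at h2 ⊢
  rw [h2]
  congr 1
  apply Finset.sum_nbij' (i := fun x => m - x + 1) (j := fun j => m + 1 - j)
  · intro a ha
    simp only [Finset.mem_range, Nat.succ_eq_add_one] at ha
    simp only [Finset.mem_Icc]
    omega
  · intro b hb
    simp only [Finset.mem_Icc] at hb
    simp only [Finset.mem_range, Nat.succ_eq_add_one]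
    omega
  · intro a ha
    simp only [Finset.mem_range, Nat.succ_eq_add_one] at ha
    omega
  · intro b hb
    simp only [Finset.mem_Icc] at hb
    omega
  · intro a ha
    simp only [Finset.mem_range, Nat.succ_eq_add_one] at ha
    have e3 : m + 1 - (m - a + 1) = a := by omega
    rw [e3]
    push_cast [Nat.cast_sub (by omega : a ≤ m)]
    ring

lemma L1 (k : ℕ) (hk : 1 ≤ k) :
    (k : ℚ) * wsum k = ∑ j ∈ Icc 1 k, (j : ℚ) * bγ j * wsum (k - j) := by
  rw [wsum_eq, Finset.mul_sum, Finset.sum_range_succ']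
  have h0 : (k : ℚ) * (PowerSeries.coeff k (Fγ ^ 0) / ((Nat.factorial 0 : ℕ) : ℚ)) = 0 := by
    rw [pow_zero, PowerSeries.coeff_one, if_neg (by omega)]
    simp
  rw [h0, add_zero]
  have hstep : ∀ m ∈ range k,
      (k : ℚ) * (PowerSeries.coeff k (Fγ ^ (m+1)) / (((m+1).factorial : ℕ) : ℚ))
      = ∑ j ∈ Icc 1 k, (j : ℚ) * bγ j
          * (PowerSeries.coeff (k - j) (Fγ ^ m) / ((m.factorial : ℕ) : ℚ)) := by
    intro m _
    have hd := coeff_deriv_pow m k hk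
    have hm1 : ((m : ℚ) + 1) ≠ 0 := by positivity
    have hfac : ((m.factorial : ℕ) : ℚ) ≠ 0 := Nat.cast_ne_zero.2 m.factorial_ne_zero
    rw [Nat.factorial_succ]
    push_cast
    calc (k : ℚ) * (PowerSeries.coeff k (Fγ ^ (m+1)) / (((m:ℚ)+1) * m.factorial))
        = ((k : ℚ) * PowerSeries.coeff k (Fγ ^ (m+1))) / (((m:ℚ)+1) * m.factorial) := by ring
      _ = (((m:ℚ)+1) * ∑ j ∈ Icc 1 k, (j : ℚ) * bγ j * PowerSeries.coeff (k - j) (Fγ ^ m))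
            / (((m:ℚ)+1) * m.factorial) := by rw [hd]
      _ = (∑ j ∈ Icc 1 k, (j : ℚ) * bγ j * PowerSeries.coeff (k - j) (Fγ ^ m))
            / (m.factorial : ℚ) := mul_div_mul_left _ _ hm1
      _ = _ := by
            rw [Finset.sum_div]
            apply Finset.sum_congr rfl
            intro j _
            ring
  rw [Finset.sum_congr rfl hstep, Finset.sum_comm]
  apply Finset.sum_congr rfl
  intro j hj
  simp only [Finset.mem_Icc] at hj
  rw [← Finset.mul_sum]
  congr 1
  rw [wsum_eq (k - j)]
  symm
  apply Finset.sum_subset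
  · intro m hm
    rw [Finset.mem_range] at hm ⊢
    omega
  · intro m _ hm
    rw [Finset.mem_range, not_lt] at hm
    rw [coeff_pow_zero (by omega), zero_div]

theorem main_eq : ∀ k : ℕ, (2 ^ k * bernoulli k) / (k.factorial : ℚ) = wsum k := by
  intro k
  induction k using Nat.strong_induction_on with
  | _ k ih =>
    rcases Nat.eq_zero_or_pos k with rfl | hk
    · rw [wsum_eq]
      simp
    · have h1 := L1 k hk
      have h2 := L2 k hk
      have hrw : ∀ j ∈ Icc 1 k, (j : ℚ) * bγ j
          * (2 ^ (k - j) * bernoulli (k - j) / ((k - j).factorial : ℚ))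
          = (j : ℚ) * bγ j * wsum (k - j) := by
        intro j hj
        simp only [Finset.mem_Icc] at hj
        rw [← mul_div_assoc] at *
        rw [mul_div_assoc, ih (k - j) (by omega)]
      rw [Finset.sum_congr rfl hrw, ← h1] at h2
      have hk0 : (k : ℚ) ≠ 0 := Nat.cast_ne_zero.2 (by omega)
      exact mul_left_cancel₀ hk0 h2


/-- The Bernoulli numbers satisfy, for every k ≥ 1:
2^k B_k / k! = Σ_{n=1}^{k} Σ_{k₁+⋯+kₙ=k, kᵢ≥1} (c_{k₁}⋯c_{kₙ})/n!,
where c_j = (−1)^{j+1} 2^j B_j / (j·j!).  The double sum over n and over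
ordered compositions of k into n positive parts is expressed as a single
sum over all compositions of k (the length of the composition playing the
role of n). -/
theorem stmt8 (k : ℕ) (hk : 1 ≤ k) :
    (2 ^ k * bernoulli k) / (k.factorial : ℚ)
      = ∑ c : Composition k,
          (c.blocks.map (fun j : ℕ =>
              ((-1 : ℚ) ^ (j + 1) * 2 ^ j * bernoulli j) / ((j : ℚ) * (j.factorial : ℚ)))).prod
            / (c.length.factorial : ℚ) := by
  rw [main_eq k, wsum]
  rfl
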